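/- Let (M, d) be a metric space, Y a type, S' a finite set of labeled points in M × Y with pairwise distinct inputs, x_test ∈ M, y ∈ Y, and b ∈ ℕ. Suppose S' contains at least b+1 points with label different from y, and let r be the (b+1)-st smallest value in the multiset {d(x_test, x_i) : (x_i, y_i) ∈ S', y_i ≠ y}; assume r > 0. Then there exists a classifier h : M → Y with h(x_test) = y, making at most b mistakes on S', such that inf{d(x_test, x') : x' ∈ M, h(x') ≠ y} ≥ r. (Such an h labels the open ball of radius r around x_test as y and agrees with the labels of S' outside this ball.) -/

import Mathlib

open Classical in
/-- Number of mistakes of classifier `h` on dataset `S`. -/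
noncomputable def mistakes {X Y : Type*} (h : X → Y) (S : Finset (X × Y)) : ℕ :=
  (S.filter fun p => h p.1 ≠ p.2).card

open Classical in
theorem stmt13 {M Y : Type*} [MetricSpace M]
    (S' : Finset (M × Y)) (hinj : ∀ p ∈ S', ∀ q ∈ S', p.1 = q.1 → p = q)
    (xtest : M) (y : Y) (b : ℕ)
    (hcard : b + 1 ≤ (S'.filter fun p => p.2 ≠ y).card)
    (r : ℝ)
    (hr : r = (Multiset.sort
        (((S'.filter fun p => p.2 ≠ y).val).map fun p => dist xtest p.1) (· ≤ ·)).getD b 0)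
    (hrpos : 0 < r) :
    ∃ h : M → Y, h xtest = y ∧ mistakes h S' ≤ b ∧
      r ≤ Metric.infDist xtest {x' | h x' ≠ y} := by
  set m := ((S'.filter fun p => p.2 ≠ y).val).map fun p => dist xtest p.1 with hm
  set l := Multiset.sort m (· ≤ ·) with hl
  have hsorted : l.Pairwise (· ≤ ·) := Multiset.pairwise_sort _ _
  have hlen : b < l.length := by
    have := Multiset.length_sort (α := ℝ) (r := (· ≤ ·)) (s := m)
    rw [hl, this, hm, Multiset.card_map]
    exact hcard
  have hrget : l[b]'hlen = r := by
    rw [hr]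
    exact (List.getD_eq_getElem l 0 hlen).symm
  -- define classifier
  let h : M → Y := fun x =>
    if dist xtest x < r then y
    else if hx : ∃ p ∈ S', p.1 = x then (Classical.choose hx).2 else y
  have hball : ∀ x, dist xtest x < r → h x = y := by
    intro x hx
    simp only [h, if_pos hx]
  have hout : ∀ p ∈ S', ¬ dist xtest p.1 < r → h p.1 = p.2 := by
    intro p hp hd
    have hex : ∃ q ∈ S', q.1 = p.1 := ⟨p, hp, rfl⟩
    have hc := Classical.choose_spec hex
    have : Classical.choose hex = p := hinj _ hc.1 p hp hc.2
    simp only [h, if_neg hd, dif_pos hex, this]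
  refine ⟨h, hball xtest (by simpa using hrpos), ?_, ?_⟩
  · -- mistakes bound
    have hsub : (S'.filter fun p => h p.1 ≠ p.2) ⊆
        (S'.filter fun p => p.2 ≠ y).filter fun p => dist xtest p.1 < r := by
      intro p hp
      simp only [Finset.mem_filter] at hp ⊢
      obtain ⟨hpS, hne⟩ := hp
      by_cases hd : dist xtest p.1 < r
      · refine ⟨⟨hpS, ?_⟩, hd⟩
        intro hy; exact hne (by rw [hball _ hd, hy])
      · exact absurd (hout p hpS hd) hne
    have hcount : (((S'.filter fun p => p.2 ≠ y).filter
        fun p => dist xtest p.1 < r).card) ≤ b := by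
      have h1 : (((S'.filter fun p => p.2 ≠ y).filter
          fun p => dist xtest p.1 < r).card) = l.countP (fun a => decide (a < r)) := by
        have hc1 : l.countP (fun a => decide (a < r)) =
            Multiset.countP (fun a => a < r) m := by
          rw [← Multiset.coe_countP, hl, Multiset.sort_eq]
        rw [hc1, hm, Multiset.countP_map]
        rw [Finset.card, Finset.filter_val]
      rw [h1]
      have hsplit : l.countP (fun a => decide (a < r)) =
          (l.take b).countP (fun a => decide (a < r)) +
            (l.drop b).countP (fun a => decide (a < r)) := by
        rw [← List.countP_append, List.take_append_drop]
      have h2 : (l.drop b).countP (fun a => decide (a < r)) = 0 := by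
        rw [List.countP_eq_zero]
        intro a ha
        obtain ⟨i, hi, rfl⟩ := List.getElem_of_mem ha
        have hlen' : b + i < l.length := by
          rw [List.length_drop] at hi; omega
        have hdrop : (l.drop b)[i] = l[b + i]'hlen' := List.getElem_drop ..
        rw [hdrop]
        have hle : r ≤ l[b + i]'hlen' := by
          rcases Nat.eq_zero_or_pos i with h0 | h0
          · subst h0
            rw [← hrget]
            apply le_of_eq
            congr 1
          · rw [← hrget]
            exact List.pairwise_iff_getElem.mp hsorted b (b + i) hlen hlen' (by omega)
        simpa using not_lt.mpr hle
      have h3 : (l.take b).countP (fun a => decide (a < r)) ≤ b :=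
        le_trans List.countP_le_length (by simp [List.length_take])
      omega
    exact le_trans (Finset.card_le_card hsub) hcount
  · -- infDist
    have hmem : r ∈ l := by rw [← hrget]; exact List.getElem_mem _
    have hmemm : r ∈ m := by
      rw [hl] at hmem
      exact (Multiset.mem_sort _).mp hmem
    obtain ⟨p, hp, hdp⟩ := Multiset.mem_map.mp hmemm
    rw [← Finset.mem_def, Finset.mem_filter] at hp
    have hne : h p.1 ≠ y := by
      rw [hout p hp.1 (by rw [hdp]; exact lt_irrefl r)]
      exact hp.2
    have hnonempty : {x' | h x' ≠ y}.Nonempty := ⟨p.1, hne⟩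
    rw [← not_lt, Metric.infDist_lt_iff hnonempty]
    push_neg
    intro x hx
    by_contra hlt
    push_neg at hlt
    exact hx (hball x hlt)
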